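/- Let ω = e^{2πi/3} ∈ ℂ, n ≥ 0 an integer, and A ⊆ {1,ω,ω²}^n trifferent. (1) For all x, y ∈ A with x ≠ y, f_{x,y}(x,y) = ∏_{i=1}^n (2x_i+y_i)(x_i+2y_i) ≠ 0. (2) For all x, y, z, t ∈ A with x ≠ y, z ≠ t and {x,y} ≠ {z,t} as unordered pairs, f_{x,y}(z,t) = 0. -/

import Mathlib

open scoped BigOperators
open Classical

noncomputable section

namespace SlicePaper

/-- Shannon entropy of the `i`-th coordinate marginal of a distribution `p` on `Δ`. -/
def margEnt {ι : Type*} [Fintype ι] (Δ : Finset (ι → ℤ)) (p : (ι → ℤ) → ℝ) (i : ι) : ℝ :=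
  -∑ α ∈ Δ.image (fun γ => γ i),
      (∑ γ ∈ Δ.filter (fun γ => γ i = α), p γ) *
        Real.log (∑ γ ∈ Δ.filter (fun γ => γ i = α), p γ)

/-- The entropy `H(Δ)` of a finite set of integer tuples. -/
def HSet {ι : Type*} [Fintype ι] (Δ : Finset (ι → ℤ)) : ℝ :=
  sSup {e : ℝ | ∃ p : (ι → ℤ) → ℝ, (∀ γ, 0 ≤ p γ) ∧ (∀ γ, p γ ≠ 0 → γ ∈ Δ) ∧
    (∑ γ ∈ Δ, p γ) = 1 ∧ e = ⨅ i, margEnt Δ p i}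

/-- Maximal elements of `Δ` w.r.t. the product of the linear orders `σ i`. -/
def maxElems {ι : Type*} [Fintype ι] (σ : ι → LinearOrder ℤ) (Δ : Finset (ι → ℤ)) :
    Finset (ι → ℤ) :=
  Δ.filter (fun γ => ∀ δ ∈ Δ, (∀ i, (σ i).le (γ i) (δ i)) → γ = δ)

/-- `ξ k = log (k / (k-1)^((k-1)/k))`. -/
def xi (k : ℕ) : ℝ :=
  Real.log ((k : ℝ) / ((k : ℝ) - 1) ^ (((k : ℝ) - 1) / (k : ℝ)))

/-- Slice rank of a coefficient array `c`. -/
def sliceRank {k : ℕ} (F : Type*) [Field F] (τ : Fin k → Type*) [∀ i, Fintype (τ i)]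
    (c : (∀ i, τ i) → F) : ℕ :=
  sInf {r : ℕ | ∃ j : Fin r → Fin k, ∃ a : ∀ l : Fin r, τ (j l) → F,
    ∃ b : ∀ l : Fin r, (((i : {i : Fin k // i ≠ j l}) → τ i.1) → F),
    ∀ s : ∀ i, τ i, c s = ∑ l : Fin r, a l (s (j l)) * b l (fun i => s i.1)}

/-- `n`-th tensor power of a coefficient array. -/
def tpow {k : ℕ} {F : Type*} [Field F] {τ : Fin k → Type*} (c : (∀ i, τ i) → F) (n : ℕ) :
    (∀ i, Fin n → τ i) → F :=
  fun u => ∏ m : Fin n, c (fun i => u i m)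

/-- Support of a coefficient array, as a finite set of integer tuples. -/
def support {k : ℕ} {F : Type*} [Field F] (S : Fin k → Finset ℤ)
    (c : (∀ i, {x : ℤ // x ∈ S i}) → F) : Finset (Fin k → ℤ) :=
  (Finset.univ.filter (fun s : ∀ i, {x : ℤ // x ∈ S i} => c s ≠ 0)).image
    (fun s i => (s i : ℤ))

/-- Section `Γ_I^x`: restrictions to coordinates outside `I` of the γ ∈ Γ agreeing with x on I. -/
def sect {k : ℕ} (Γ : Finset (Fin k → ℤ)) (I : Finset (Fin k)) (x : Fin k → ℤ) :
    Finset ({i : Fin k // i ∉ I} → ℤ) :=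
  (Γ.filter (fun γ => ∀ i ∈ I, γ i = x i)).image (fun γ i => γ i.1)

/-- Section along a single coordinate. -/
def sect1 {k : ℕ} (Γ : Finset (Fin k → ℤ)) (i : Fin k) (a : ℤ) :
    Finset ({j : Fin k // j ≠ i} → ℤ) :=
  (Γ.filter (fun γ => γ i = a)).image (fun γ j => γ j.1)

/-- Trifferent set of strings. -/
def trifferent {n : ℕ} {α : Type*} (A : Finset (Fin n → α)) : Prop :=
  ∀ x ∈ A, ∀ y ∈ A, ∀ z ∈ A, x ≠ y → y ≠ z → x ≠ z →
    ∃ i, x i ≠ y i ∧ y i ≠ z i ∧ x i ≠ z i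

/-- The cube root of unity `ω = e^{2πi/3}`. -/
def w : ℂ := Complex.exp (2 * Real.pi * Complex.I / 3)

/-- The tensor `f_{x,y}(z,t)` used for the trifference problem. -/
def f {n : ℕ} (x y z t : Fin n → ℂ) : ℂ :=
  ∏ i, (x i + y i + z i) * (x i + y i + t i)

/-- Monomial functions `g_{α,β}`. -/
def g {n : ℕ} (α β : Fin n → ℕ) : (Fin n → ℂ) × (Fin n → ℂ) → ℂ :=
  fun q => ∏ i, (q.1 i + q.2 i) ^ α i * (q.1 i * q.2 i) ^ β i


lemma w_cube : w ^ 3 = 1 := by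
  rw [w, ← Complex.exp_nat_mul]
  have : (3 : ℂ) * (2 * Real.pi * Complex.I / 3) = 2 * Real.pi * Complex.I := by ring
  rw [show ((3 : ℕ) : ℂ) = (3 : ℂ) by norm_num, this]
  simpa using Complex.exp_int_mul_two_pi_mul_I 1

lemma w_ne_one : w ≠ 1 := by
  rw [w]
  intro h
  rw [Complex.exp_eq_one_iff] at h
  obtain ⟨m, hm⟩ := h
  have hπ : (Real.pi : ℂ) ≠ 0 := by simpa using Real.pi_ne_zero
  have hI : Complex.I ≠ 0 := Complex.I_ne_zero
  have hkey : ((m * 3 : ℤ) : ℂ) = ((1 : ℤ) : ℂ) := by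
    push_cast
    have h2 : (2 : ℂ) * Real.pi * Complex.I ≠ 0 := by
      simp [hπ, hI]
    field_simp at hm
    rcases mul_eq_mul_right_iff.mp (by linear_combination (2 * Real.pi * Complex.I) * hm :
        (1 : ℂ) * (2 * Real.pi * Complex.I) = ((m : ℂ) * 3) * (2 * Real.pi * Complex.I)) with
      h | h
    · linear_combination -h
    · exact absurd h h2
  have : m * 3 = 1 := by exact_mod_cast hkey
  omega

lemma one_add_w_add_w_sq : 1 + w + w ^ 2 = 0 := by
  have h : (w - 1) * (1 + w + w ^ 2) = 0 := by
    have := w_cube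
    linear_combination this - 1
  rcases mul_eq_zero.mp h with h1 | h2
  · exact absurd (by linear_combination h1) w_ne_one
  · exact h2

lemma abs_root {a : ℂ} (ha : a ∈ ({1, w, w ^ 2} : Set ℂ)) : ‖a‖ = 1 := by
  have hw : ‖w‖ = 1 := by
    rw [w, Complex.norm_exp]
    have : (2 * (Real.pi : ℂ) * Complex.I / 3).re = 0 := by
      simp [Complex.div_re, Complex.mul_re]
    rw [this, Real.exp_zero]
  rcases ha with rfl | rfl | rfl
  · simp
  · exact hw
  · simp [norm_pow, hw]

lemma two_add_ne {a b : ℂ} (ha : a ∈ ({1, w, w ^ 2} : Set ℂ))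
    (hb : b ∈ ({1, w, w ^ 2} : Set ℂ)) : 2 * a + b ≠ 0 := by
  intro h
  have h2 : (2 : ℂ) * a = -b := by linear_combination h
  have := congrArg (‖·‖) h2
  rw [norm_mul, norm_neg, abs_root ha, abs_root hb] at this
  norm_num at this

lemma sum_distinct_roots {a b c : ℂ} (ha : a ∈ ({1, w, w ^ 2} : Set ℂ))
    (hb : b ∈ ({1, w, w ^ 2} : Set ℂ)) (hc : c ∈ ({1, w, w ^ 2} : Set ℂ))
    (hab : a ≠ b) (hbc : b ≠ c) (hac : a ≠ c) : a + b + c = 0 := by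
  have h1 := one_add_w_add_w_sq
  rcases ha with rfl | rfl | rfl <;> rcases hb with rfl | rfl | rfl <;>
    rcases hc with rfl | rfl | rfl <;>
    first
      | exact absurd rfl hab
      | exact absurd rfl hbc
      | exact absurd rfl hac
      | linear_combination h1

/-- values of `f_{x,y}` on pairs from a trifferent set. -/
theorem stmt16 {n : ℕ} (A : Finset (Fin n → ℂ))
    (hA : ∀ x ∈ A, ∀ i, x i ∈ ({1, w, w ^ 2} : Set ℂ))
    (htrif : trifferent A) :
    (∀ x ∈ A, ∀ y ∈ A, x ≠ y →
      f x y x y = ∏ i, (2 * x i + y i) * (x i + 2 * y i) ∧ f x y x y ≠ 0) ∧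
    (∀ x ∈ A, ∀ y ∈ A, ∀ z ∈ A, ∀ t ∈ A, x ≠ y → z ≠ t →
      ¬((x = z ∧ y = t) ∨ (x = t ∧ y = z)) → f x y z t = 0) := by
  constructor
  · intro x hx y hy hxy
    constructor
    · rw [f]
      apply Finset.prod_congr rfl
      intro i _
      ring
    · rw [f]
      rw [Finset.prod_ne_zero_iff]
      intro i _
      apply mul_ne_zero
      · have := two_add_ne (hA x hx i) (hA y hy i)
        intro h; apply this; linear_combination h
      · have := two_add_ne (hA y hy i) (hA x hx i)
        intro h; apply this; linear_combination h
  · intro x hx y hy z hz t ht hxy hzt hne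
    by_cases hzxy : z ≠ x ∧ z ≠ y
    · obtain ⟨i, h1, h2, h3⟩ := htrif x hx y hy z hz hxy hzxy.2.symm hzxy.1.symm
      rw [f]
      apply Finset.prod_eq_zero (Finset.mem_univ i)
      rw [mul_eq_zero]
      left
      exact sum_distinct_roots (hA x hx i) (hA y hy i) (hA z hz i) h1 h2 h3
    · by_cases htxy : t ≠ x ∧ t ≠ y
      · obtain ⟨i, h1, h2, h3⟩ := htrif x hx y hy t ht hxy htxy.2.symm htxy.1.symm
        rw [f]
        apply Finset.prod_eq_zero (Finset.mem_univ i)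
        rw [mul_eq_zero]
        right
        exact sum_distinct_roots (hA x hx i) (hA y hy i) (hA t ht i) h1 h2 h3
      · exfalso
        push_neg at hzxy htxy
        apply hne
        by_cases hzx : z = x
        · subst hzx
          left
          have htz : t ≠ z := fun h => hzt h.symm
          exact ⟨rfl, (htxy htz).symm⟩
        · have hzy := hzxy hzx
          subst hzy
          right
          have htz : t ≠ z := fun h => hzt h.symm
          by_cases htx : t = x
          · exact ⟨htx.symm, rfl⟩
          · exact absurd (htxy htx) htz

end SlicePaper
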